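/- Let λ₁,…,λₙ be distinct elements of a field of characteristic zero, 0 < k < n, and let s_μ denote the Schur polynomial in k variables for a partition μ with at most k parts, each part at most n−k. Then ∑_{I⊂[n],|I|=k} s_μ(λ_I) / ∏_{i∈I}∏_{j∈Iᶜ}(λ_i−λ_j) = 1 if μ = ((n−k)^k) is the full rectangle, and 0 otherwise. -/

import Mathlib

open Finset
open Matrix Polynomial

section CauchyBinet

open Equiv Matrix
open Equiv.Perm (sign)

variable {R : Type*} [CommRing R] {k n : ℕ}

private lemma cb_image (I : Finset (Fin n)) (hI : I.card = k) :
    Finset.image (fun i => ((I.orderIsoOfFin hI) i : Fin n)) univ = I := by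
  ext x
  simp only [mem_image, mem_univ, true_and]
  constructor
  · rintro ⟨i, rfl⟩; exact ((I.orderIsoOfFin hI) i).2
  · intro hx; exact ⟨(I.orderIsoOfFin hI).symm ⟨x, hx⟩, by simp⟩

private lemma cb_image' (I : Finset (Fin n)) (hI : I.card = k) (τ : Perm (Fin k)) :
    Finset.image (fun i => ((I.orderIsoOfFin hI) (τ i) : Fin n)) univ = I := by
  have : (fun i => ((I.orderIsoOfFin hI) (τ i) : Fin n))
      = (fun i => ((I.orderIsoOfFin hI) i : Fin n)) ∘ τ := rfl
  rw [this, ← Finset.image_image, Finset.image_univ_equiv, cb_image]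

private lemma cb_iota_inj (I : Finset (Fin n)) (hI : I.card = k) :
    Function.Injective (fun i => ((I.orderIsoOfFin hI) i : Fin n)) := fun a b h => by
  exact (I.orderIsoOfFin hI).injective (Subtype.ext h)

private lemma cb_aux {B : Matrix (Fin k) (Fin n) R} {A : Matrix (Fin n) (Fin k) R}
    {p : Fin k → Fin n} (H : ¬Function.Injective p) :
    (∑ σ : Perm (Fin k), ((sign σ : ℤ) : R) * ∏ x, B (σ x) (p x) * A (p x) x) = 0 := by
  obtain ⟨i, j, hpij, hij⟩ : ∃ i j, p i = p j ∧ i ≠ j := by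
    rw [Function.Injective] at H
    push_neg at H
    obtain ⟨i, j, h1, h2⟩ := H
    exact ⟨i, j, h1, h2⟩
  exact
    sum_involution (fun σ _ => σ * Equiv.swap i j)
      (fun σ _ => by
        have : (∏ x, B (σ x) (p x)) = ∏ x, B ((σ * Equiv.swap i j) x) (p x) :=
          Fintype.prod_equiv (Equiv.swap i j) _ _ (by simp [Equiv.apply_swap_eq_self hpij])
        simp [this, Equiv.Perm.sign_swap hij, -Equiv.Perm.sign_swap', prod_mul_distrib])
      (fun σ _ _ => (not_congr Equiv.mul_swap_eq_iff).mpr hij) (fun _ _ => mem_univ _)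
      fun σ _ => Equiv.mul_swap_involutive i j σ

private theorem cauchy_binet (B : Matrix (Fin k) (Fin n) R) (A : Matrix (Fin n) (Fin k) R) :
    (B * A).det = ∑ I : {s : Finset (Fin n) // s.card = k},
      (B.submatrix id (fun i => ((I.1.orderIsoOfFin I.2) i : Fin n))).det *
      (A.submatrix (fun i => ((I.1.orderIsoOfFin I.2) i : Fin n)) id).det := by
  classical
  have step1 : (B * A).det =
      ∑ p : Fin k → Fin n, ∑ σ : Perm (Fin k),
        ((sign σ : ℤ) : R) * ∏ i, B (σ i) (p i) * A (p i) i := by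
    simp only [det_apply', mul_apply, prod_univ_sum, mul_sum, Fintype.piFinset_univ]
    rw [Finset.sum_comm]
  have step2 : (B * A).det =
      ∑ p ∈ univ.filter (fun p : Fin k → Fin n => Function.Injective p),
        ∑ σ : Perm (Fin k), ((sign σ : ℤ) : R) * ∏ i, B (σ i) (p i) * A (p i) i := by
    rw [step1]
    refine (sum_subset (filter_subset _ _) fun p _ hp => cb_aux ?_).symm
    simpa using hp
  rw [step2]
  rw [← Finset.sum_bij
    (i := fun (Iτ : {s : Finset (Fin n) // s.card = k} × Perm (Fin k)) (_ : Iτ ∈ univ) =>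
      (fun i => ((Iτ.1.1.orderIsoOfFin Iτ.1.2) (Iτ.2 i) : Fin n)))
    (t := univ.filter (fun p : Fin k → Fin n => Function.Injective p))
    (g := fun p => ∑ σ : Perm (Fin k), ((sign σ : ℤ) : R) * ∏ i, B (σ i) (p i) * A (p i) i)
    (hi := fun Iτ _ => by
      simp only [mem_filter, mem_univ, true_and]
      exact (cb_iota_inj Iτ.1.1 Iτ.1.2).comp Iτ.2.injective)
    (i_inj := by
      rintro ⟨I, τ⟩ _ ⟨J, ρ⟩ _ h
      have hIJ : I.1 = J.1 := by
        simp only at h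
        rw [← cb_image' I.1 I.2 τ, ← cb_image' J.1 J.2 ρ, h]
      obtain ⟨I, hI⟩ := I
      obtain ⟨J, hJ⟩ := J
      simp only at hIJ
      subst hIJ
      simp only at h
      have hτρ : τ = ρ := Equiv.ext fun i => cb_iota_inj I hI (congrFun h i)
      simp [hτρ]
    )
    (i_surj := by
      intro p hp
      simp only [mem_filter, mem_univ, true_and] at hp
      have hcard : (Finset.image p univ).card = k := by
        rw [Finset.card_image_of_injective _ hp, card_univ, Fintype.card_fin]
      set I : Finset (Fin n) := Finset.image p univ with hIdef
      have hmem : ∀ i, p i ∈ I := fun i => Finset.mem_image_of_mem p (mem_univ i)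
      have hg : Function.Injective
          (fun x => (I.orderIsoOfFin hcard).symm ⟨p x, hmem x⟩) := by
        intro a b h
        exact hp (congrArg Subtype.val ((I.orderIsoOfFin hcard).symm.injective.eq_iff.mp h))
      refine ⟨⟨⟨I, hcard⟩, Equiv.ofBijective _ (Finite.injective_iff_bijective.mp hg)⟩,
        mem_univ _, ?_⟩
      funext i
      simp [Equiv.ofBijective]
    )
    (h := fun Iτ _ => rfl)]
  rw [Fintype.sum_prod_type]
  refine Finset.sum_congr rfl fun I _ => ?_
  set ι : Fin k → Fin n := fun i => ((I.1.orderIsoOfFin I.2) i : Fin n) with hι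
  have inner : ∀ τ : Perm (Fin k),
      (∑ σ : Perm (Fin k), ((sign σ : ℤ) : R) * ∏ i, B (σ i) (ι (τ i)) * A (ι (τ i)) i)
      = (∑ ρ : Perm (Fin k), ((sign ρ : ℤ) : R) * ∏ j, B (ρ j) (ι j)) *
        (((sign τ : ℤ) : R) * ∏ i, A (ι (τ i)) i) := by
    intro τ
    rw [Finset.sum_mul]
    refine (Fintype.sum_equiv (Equiv.mulRight τ) _ _ fun ρ => ?_).symm
    simp only [Equiv.coe_mulRight, Equiv.Perm.coe_mul, Function.comp_apply]
    have hsign : ((sign (ρ * τ) : ℤ) : R) = ((sign ρ : ℤ) : R) * ((sign τ : ℤ) : R) := by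
      rw [Equiv.Perm.sign_mul]; push_cast; ring
    have hprodB : (∏ x, B (ρ (τ x)) (ι (τ x))) = ∏ j, B (ρ j) (ι j) :=
      Fintype.prod_equiv τ _ _ fun x => rfl
    calc (((sign ρ : ℤ) : R) * ∏ j, B (ρ j) (ι j)) * (((sign τ : ℤ) : R) * ∏ i, A (ι (τ i)) i)
        = (((sign ρ : ℤ) : R) * ((sign τ : ℤ) : R)) *
          ((∏ x, B (ρ (τ x)) (ι (τ x))) * ∏ i, A (ι (τ i)) i) := by rw [hprodB]; ring
      _ = ((sign (ρ * τ) : ℤ) : R) * ∏ i, B (ρ (τ i)) (ι (τ i)) * A (ι (τ i)) i := by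
          rw [hsign, prod_mul_distrib]
  simp only [hι] at inner
  simp only [inner]
  rw [← Finset.mul_sum]
  congr 1
  · rw [det_apply']; rfl
  · rw [det_apply']; rfl

end CauchyBinet

section Aux

open Polynomial Matrix

variable {F : Type*} [Field F] {n k : ℕ}

private lemma coeff_nodal_erase (lam : Fin n → F) (i : Fin n) :
    ∀ s : ℕ, s < n →
    (Lagrange.nodal ((univ : Finset (Fin n)).erase i) lam).coeff (n - 1 - s)
      = ∑ u ∈ Finset.range (s + 1),
          lam i ^ u * (Lagrange.nodal (univ : Finset (Fin n)) lam).coeff (n - s + u) := by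
  have hQ : Lagrange.nodal (univ : Finset (Fin n)) lam
      = (X - C (lam i)) * Lagrange.nodal ((univ : Finset (Fin n)).erase i) lam :=
    Lagrange.nodal_eq_mul_nodal_erase (mem_univ i)
  have hdeg : (Lagrange.nodal ((univ : Finset (Fin n)).erase i) lam).natDegree = n - 1 := by
    rw [Lagrange.natDegree_nodal, card_erase_of_mem (mem_univ i), card_univ, Fintype.card_fin]
  have hmonic : (Lagrange.nodal ((univ : Finset (Fin n)).erase i) lam).Monic :=
    Lagrange.nodal_monic
  have hrec : ∀ m : ℕ, (Lagrange.nodal (univ : Finset (Fin n)) lam).coeff (m + 1)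
      = (Lagrange.nodal ((univ : Finset (Fin n)).erase i) lam).coeff m
        - lam i * (Lagrange.nodal ((univ : Finset (Fin n)).erase i) lam).coeff (m + 1) := by
    intro m
    rw [hQ, sub_mul, coeff_sub, coeff_X_mul, coeff_C_mul]
  intro s
  induction s with
  | zero =>
    intro hn
    have hQdeg : (Lagrange.nodal (univ : Finset (Fin n)) lam).natDegree = n := by
      rw [Lagrange.natDegree_nodal, card_univ, Fintype.card_fin]
    have e1 : (Lagrange.nodal ((univ : Finset (Fin n)).erase i) lam).coeff (n - 1) = 1 := by
      have := hmonic.coeff_natDegree; rwa [hdeg] at this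
    have e2 : (Lagrange.nodal (univ : Finset (Fin n)) lam).coeff n = 1 := by
      have := (Lagrange.nodal_monic :
           (Lagrange.nodal (univ : Finset (Fin n)) lam).Monic).coeff_natDegree
      rwa [hQdeg] at this
    simp only [Nat.sub_zero, zero_add, Finset.sum_range_one, pow_zero, one_mul,
      Nat.add_zero, e1, e2]
  | succ s ih =>
    intro hn
    have hs : s < n := by omega
    have h1 : n - 1 - (s + 1) + 1 = n - 1 - s := by omega
    have h2 : (Lagrange.nodal ((univ : Finset (Fin n)).erase i) lam).coeff (n - 1 - (s + 1))
        = (Lagrange.nodal (univ : Finset (Fin n)) lam).coeff (n - 1 - s)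
          + lam i * (Lagrange.nodal ((univ : Finset (Fin n)).erase i) lam).coeff (n - 1 - s) := by
      have := hrec (n - 1 - (s + 1))
      rw [h1] at this
      rw [this]
      ring
    rw [h2, ih hs, Finset.mul_sum]
    rw [Finset.sum_range_succ' (fun u => lam i ^ u
      * (Lagrange.nodal (univ : Finset (Fin n)) lam).coeff (n - (s + 1) + u))]
    have h3 : ∀ u, lam i * (lam i ^ u
          * (Lagrange.nodal (univ : Finset (Fin n)) lam).coeff (n - s + u))
        = lam i ^ (u + 1)
          * (Lagrange.nodal (univ : Finset (Fin n)) lam).coeff (n - (s + 1) + (u + 1)) := by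
      intro u
      have : n - s + u = n - (s + 1) + (u + 1) := by omega
      rw [this]; ring
    simp only [h3]
    have h4 : n - 1 - s = n - (s + 1) + 0 := by omega
    rw [pow_zero, one_mul, h4]
    exact add_comm _ _

private lemma det_pow_rev (x : Fin k → F) :
    (Matrix.of fun i j : Fin k => x i ^ (k - 1 - (j : ℕ))).det
      = ∏ p : Fin k, ∏ q ∈ Ioi p, (x p - x q) := by
  have h1 : (Matrix.of fun i j : Fin k => x i ^ (k - 1 - (j : ℕ)))
      = ((Matrix.vandermonde fun i => x i.rev).submatrix Fin.revPerm Fin.revPerm) := by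
    ext i j
    simp only [Matrix.of_apply, Matrix.submatrix_apply, Matrix.vandermonde_apply,
      Fin.revPerm_apply, Fin.rev_rev, Fin.val_rev]
    congr 1
    omega
  rw [h1, Matrix.det_submatrix_equiv_self, Matrix.det_vandermonde]
  have stepa : ∀ i : Fin k, (∏ j ∈ Ioi i, (x j.rev - x i.rev))
      = ∏ j ∈ Iio i.rev, (x j - x i.rev) := by
    intro i
    refine Finset.prod_nbij' Fin.rev Fin.rev ?_ ?_ ?_ ?_ ?_
    · intro a ha
      simp only [mem_Ioi] at ha
      simp only [mem_Iio]
      exact Fin.rev_lt_rev.mpr ha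
    · intro a ha
      simp only [mem_Iio] at ha
      simp only [mem_Ioi]
      simpa using Fin.rev_lt_rev.mpr ha
    · intro a _; exact Fin.rev_rev a
    · intro a _; exact Fin.rev_rev a
    · intro a _; rfl
  simp only [stepa]
  have stepb : (∏ i : Fin k, ∏ j ∈ Iio i.rev, (x j - x i.rev))
      = ∏ i : Fin k, ∏ j ∈ Iio i, (x j - x i) :=
    Fintype.prod_equiv Fin.revPerm _ _ fun i => rfl
  rw [stepb]
  exact Finset.prod_comm' (by simp)

end Aux

/-- The Schur polynomial `s_μ` evaluated at distinct points `v`, via the bialternant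
formula: `det(v i ^ (μ j + k - 1 - j)) / det(v i ^ (k - 1 - j))`. -/
noncomputable def schurEval {F : Type*} [Field F] (k : ℕ) (μ : Fin k → ℕ)
    (v : Fin k → F) : F :=
  (Matrix.of fun i j : Fin k => v i ^ (μ j + (k - 1 - (j : ℕ)))).det /
    (Matrix.of fun i j : Fin k => v i ^ (k - 1 - (j : ℕ))).det

theorem sum_schur_div_prod {F : Type*} [Field F] [CharZero F]
    (n k : ℕ) (hk0 : 0 < k) (hk : k < n)
    (lam : Fin n → F) (hlam : Function.Injective lam)
    (μ : Fin k → ℕ) (hμ : Antitone μ) (hμle : ∀ i, μ i ≤ n - k) :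
    ∑ I : {s : Finset (Fin n) // s.card = k},
        schurEval k μ (fun i => lam ((I.1.orderIsoOfFin I.2) i : Fin n)) /
          ∏ i ∈ I.1, ∏ j ∈ I.1ᶜ, (lam i - lam j) =
      (if μ = fun _ => n - k then (1 : F) else 0) := by
  classical
  have hkn : k ≤ n := hk.le
  set a : Fin k → ℕ := fun j => μ j + (k - 1 - (j : ℕ)) with ha
  have hinjOn : Set.InjOn lam ↑(univ : Finset (Fin n)) := fun p _ q _ h => hlam h
  have hQnat : (Lagrange.nodal (univ : Finset (Fin n)) lam).natDegree = n := by
    rw [Lagrange.natDegree_nodal, card_univ, Fintype.card_fin]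
  have hQn : (Lagrange.nodal (univ : Finset (Fin n)) lam).coeff n = 1 := by
    have := (Lagrange.nodal_monic :
      (Lagrange.nodal (univ : Finset (Fin n)) lam).Monic).coeff_natDegree
    rwa [hQnat] at this
  set B : Matrix (Fin k) (Fin n) F :=
    Matrix.of fun r i =>
      (Lagrange.basis (univ : Finset (Fin n)) lam i).coeff (n - 1 - (r : ℕ)) with hB
  set A : Matrix (Fin n) (Fin k) F := Matrix.of fun i j => lam i ^ a j with hA
  have ha_lt : ∀ j, a j < n := by
    intro j
    have h1 := hμle j
    have h2 : (j : ℕ) < k := j.2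
    simp only [ha]
    omega
  -- the entries of B * A
  have hBA : ∀ (r j : Fin k),
      (B * A) r j = if n - 1 - (r : ℕ) = a j then 1 else 0 := by
    intro r j
    have hX : (Polynomial.X ^ (a j) : Polynomial F)
        = Lagrange.interpolate (univ : Finset (Fin n)) lam (fun i => lam i ^ a j) := by
      have hdeg : (Polynomial.X ^ (a j) : Polynomial F).degree
          < ((univ : Finset (Fin n)).card : WithBot ℕ) := by
        rw [Polynomial.degree_X_pow, card_univ, Fintype.card_fin]
        exact_mod_cast ha_lt j
      have h1 := Lagrange.eq_interpolate (f := (Polynomial.X ^ (a j) : Polynomial F))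
        hinjOn hdeg
      rw [h1]
      congr 1
      funext i
      simp
    calc (B * A) r j = ∑ i : Fin n, B r i * A i j := Matrix.mul_apply
      _ = ∑ i : Fin n,
            lam i ^ a j * (Lagrange.basis (univ : Finset (Fin n)) lam i).coeff
              (n - 1 - (r : ℕ)) := by
            refine Finset.sum_congr rfl fun i _ => ?_
            simp only [hB, hA, Matrix.of_apply]
            ring
      _ = (Lagrange.interpolate (univ : Finset (Fin n)) lam
            (fun i => lam i ^ a j)).coeff (n - 1 - (r : ℕ)) := by
            rw [Lagrange.interpolate_apply, Polynomial.finset_sum_coeff]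
            exact Finset.sum_congr rfl fun i _ => by rw [Polynomial.coeff_C_mul]
      _ = (Polynomial.X ^ (a j) : Polynomial F).coeff (n - 1 - (r : ℕ)) := by rw [← hX]
      _ = if n - 1 - (r : ℕ) = a j then 1 else 0 := Polynomial.coeff_X_pow _ _
  -- the determinant of B * A
  have hdet : (B * A).det = if μ = (fun _ => n - k) then (1 : F) else 0 := by
    by_cases hcase : μ = fun _ => n - k
    · rw [if_pos hcase]
      have hone : B * A = 1 := by
        ext r j
        rw [hBA r j, Matrix.one_apply]
        have h2 : (j : ℕ) < k := j.2
        have h3 : (r : ℕ) < k := r.2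
        have hiff : (n - 1 - (r : ℕ) = a j) ↔ (r = j) := by
          rw [Fin.ext_iff]
          simp only [ha, hcase]
          omega
        rw [if_congr hiff rfl rfl]
      rw [hone, Matrix.det_one]
    · rw [if_neg hcase]
      have hex : ∃ j, μ j ≠ n - k := by
        by_contra hcon
        push_neg at hcon
        exact hcase (funext hcon)
      obtain ⟨j0, hj0⟩ := hex
      set jl : Fin k := ⟨k - 1, by omega⟩ with hjl
      have hμjl : μ jl < n - k := by
        have h1 : j0 ≤ jl := by
          rw [Fin.le_def]
          have := j0.2
          simp only [hjl]
          omega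
        have h2 := hμ h1
        have h3 := hμle j0
        omega
      apply Matrix.det_eq_zero_of_column_eq_zero jl
      intro r
      rw [hBA r jl]
      have h3 : (r : ℕ) < k := r.2
      have hajl : a jl = μ jl := by
        simp only [ha, hjl]
        omega
      rw [if_neg]
      omega
  -- the per-subset term identity
  have hterm : ∀ I : {s : Finset (Fin n) // s.card = k},
      (B.submatrix id (fun i => ((I.1.orderIsoOfFin I.2) i : Fin n))).det *
      (A.submatrix (fun i => ((I.1.orderIsoOfFin I.2) i : Fin n)) id).det
      = schurEval k μ (fun i => lam ((I.1.orderIsoOfFin I.2) i : Fin n)) /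
          ∏ i ∈ I.1, ∏ j ∈ I.1ᶜ, (lam i - lam j) := by
    intro I
    set ι : Fin k → Fin n := fun i => ((I.1.orderIsoOfFin I.2) i : Fin n) with hι
    have hιinj : Function.Injective ι := cb_iota_inj I.1 I.2
    have himg : Finset.image ι univ = I.1 := cb_image I.1 I.2
    have hxinj : Function.Injective (fun i => lam (ι i)) := fun p q h => hιinj (hlam h)
    set RV : F := ∏ p : Fin k, ∏ q ∈ Ioi p, (lam (ι p) - lam (ι q)) with hRV
    set VM : F := ∏ p : Fin k, ∏ q ∈ Ioi p, (lam (ι q) - lam (ι p)) with hVM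
    set P : F := ∏ i ∈ I.1, ∏ j ∈ I.1ᶜ, (lam i - lam j) with hP
    -- B factorization
    have hBfact : B.submatrix id ι
        = (Matrix.of fun (r u : Fin k) =>
            (Lagrange.nodal (univ : Finset (Fin n)) lam).coeff (n - (r : ℕ) + (u : ℕ)))
          * (Matrix.of fun (u i' : Fin k) =>
              Lagrange.nodalWeight univ lam (ι i') * lam (ι i') ^ (u : ℕ)) := by
      ext r i'
      rw [Matrix.mul_apply]
      show (Lagrange.basis (univ : Finset (Fin n)) lam (ι i')).coeff (n - 1 - (r : ℕ)) = _
      simp only [Matrix.of_apply]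
      have hbasis : Lagrange.basis univ lam (ι i')
          = Polynomial.C (Lagrange.nodalWeight univ lam (ι i'))
            * Lagrange.nodal ((univ : Finset (Fin n)).erase (ι i')) lam := by
        rw [Lagrange.basis_eq_prod_sub_inv_mul_nodal_div (mem_univ (ι i')),
          Lagrange.nodal_erase_eq_nodal_div (mem_univ (ι i'))]
      rw [hbasis, Polynomial.coeff_C_mul,
        coeff_nodal_erase lam (ι i') (r : ℕ) (lt_of_lt_of_le r.2 hkn)]
      have hext : ∑ u ∈ Finset.range ((r : ℕ) + 1),
            lam (ι i') ^ u *
              (Lagrange.nodal (univ : Finset (Fin n)) lam).coeff (n - (r : ℕ) + u)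
          = ∑ u ∈ Finset.range k,
            lam (ι i') ^ u *
              (Lagrange.nodal (univ : Finset (Fin n)) lam).coeff (n - (r : ℕ) + u) := by
        refine Finset.sum_subset ?_ ?_
        · intro u hu
          simp only [Finset.mem_range] at hu ⊢
          have := r.2
          omega
        · intro u hu hnot
          simp only [Finset.mem_range] at hu hnot
          have hlt : n < n - (r : ℕ) + u := by
            have := r.2
            omega
          rw [Polynomial.coeff_eq_zero_of_natDegree_lt (by rw [hQnat]; exact hlt), mul_zero]
      rw [hext, ← Fin.sum_univ_eq_sum_range (fun u =>
        lam (ι i') ^ u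
          * (Lagrange.nodal (univ : Finset (Fin n)) lam).coeff (n - (r : ℕ) + u)) k,
        Finset.mul_sum]
      exact Finset.sum_congr rfl fun u _ => by ring
    -- determinant of T
    have hdetT : (Matrix.of fun (r u : Fin k) =>
        (Lagrange.nodal (univ : Finset (Fin n)) lam).coeff (n - (r : ℕ) + (u : ℕ))).det
          = 1 := by
      have htri : (Matrix.of fun (r u : Fin k) =>
          (Lagrange.nodal (univ : Finset (Fin n)) lam).coeff
            (n - (r : ℕ) + (u : ℕ))).BlockTriangular OrderDual.toDual := by
        intro i j hij
        have hij' : (i : ℕ) < (j : ℕ) := hij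
        simp only [Matrix.of_apply]
        apply Polynomial.coeff_eq_zero_of_natDegree_lt
        rw [hQnat]
        have := i.2
        omega
      rw [Matrix.det_of_lowerTriangular _ htri]
      refine Finset.prod_eq_one fun i _ => ?_
      simp only [Matrix.of_apply]
      have : n - (i : ℕ) + (i : ℕ) = n := by
        have := i.2
        omega
      rw [this, hQn]
    -- determinant of W
    have hdetW : (Matrix.of fun (u i' : Fin k) =>
        Lagrange.nodalWeight univ lam (ι i') * lam (ι i') ^ (u : ℕ)).det
          = (∏ i' : Fin k, Lagrange.nodalWeight univ lam (ι i')) * VM := by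
      rw [show (Matrix.of fun (u i' : Fin k) =>
            Lagrange.nodalWeight univ lam (ι i') * lam (ι i') ^ (u : ℕ))
          = Matrix.of (fun (u i' : Fin k) =>
              (fun q => Lagrange.nodalWeight univ lam (ι q)) i'
                * (Matrix.of fun (u i' : Fin k) => lam (ι i') ^ (u : ℕ)) u i') from rfl,
        Matrix.det_mul_row]
      congr 1
      have : (Matrix.of fun (u i' : Fin k) => lam (ι i') ^ (u : ℕ))
          = (Matrix.vandermonde fun i' => lam (ι i'))ᵀ := rfl
      rw [this, Matrix.det_transpose, Matrix.det_vandermonde]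
    -- product of nodal weights
    have hprodd : ∏ i' : Fin k, ∏ j ∈ (univ : Finset (Fin n)).erase (ι i'),
          (lam (ι i') - lam j) = (VM * RV) * P := by
      have hsplit : ∀ i' : Fin k, (univ : Finset (Fin n)).erase (ι i')
          = (I.1.erase (ι i')) ∪ I.1ᶜ := by
        intro i'
        have hmem : ι i' ∈ I.1 := by rw [← himg]; exact mem_image_of_mem ι (mem_univ i')
        ext t
        simp only [mem_erase, mem_univ, and_true, mem_union, mem_compl]
        constructor
        · intro hne
          by_cases ht : t ∈ I.1
          · exact Or.inl ⟨hne, ht⟩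
          · exact Or.inr ht
        · rintro (⟨hne, _⟩ | hns)
          · exact hne
          · intro heq; rw [heq] at hns; exact hns hmem
      have hdisj : ∀ i' : Fin k, Disjoint (I.1.erase (ι i')) I.1ᶜ := fun i' =>
        disjoint_compl_right.mono_left (erase_subset _ _)
      have step1 : ∏ i' : Fin k, ∏ j ∈ (univ : Finset (Fin n)).erase (ι i'),
            (lam (ι i') - lam j)
          = (∏ i' : Fin k, ∏ j ∈ I.1.erase (ι i'), (lam (ι i') - lam j))
            * ∏ i' : Fin k, ∏ j ∈ I.1ᶜ, (lam (ι i') - lam j) := by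
        rw [← Finset.prod_mul_distrib]
        refine Finset.prod_congr rfl fun i' _ => ?_
        rw [hsplit i', Finset.prod_union (hdisj i')]
      rw [step1]
      congr 1
      · have himg2 : ∀ i' : Fin k, I.1.erase (ι i')
            = Finset.image ι ((univ : Finset (Fin k)).erase i') := fun i' => by
          rw [Finset.image_erase hιinj, himg]
        have step2 : ∀ i' : Fin k, ∏ j ∈ I.1.erase (ι i'), (lam (ι i') - lam j)
            = ∏ q ∈ (univ : Finset (Fin k)).erase i', (lam (ι i') - lam (ι q)) := by
          intro i'
          rw [himg2 i', Finset.prod_image (fun p _ q _ h => hιinj h)]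
        simp only [step2]
        have hsplit2 : ∀ i' : Fin k, (univ : Finset (Fin k)).erase i'
            = Iio i' ∪ Ioi i' := by
          intro i'
          ext q
          simp only [mem_erase, mem_univ, and_true, mem_union, mem_Iio, mem_Ioi]
          exact ne_iff_lt_or_gt
        have hdisj2 : ∀ i' : Fin k, Disjoint (Iio i') (Ioi i') := fun i' =>
          Finset.disjoint_left.mpr fun q hq hq2 =>
            absurd (mem_Ioi.mp hq2) (not_lt.mpr (le_of_lt (mem_Iio.mp hq)))
        have step3 : ∏ i' : Fin k, ∏ q ∈ (univ : Finset (Fin k)).erase i',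
              (lam (ι i') - lam (ι q))
            = (∏ i' : Fin k, ∏ q ∈ Iio i', (lam (ι i') - lam (ι q)))
              * ∏ i' : Fin k, ∏ q ∈ Ioi i', (lam (ι i') - lam (ι q)) := by
          rw [← Finset.prod_mul_distrib]
          refine Finset.prod_congr rfl fun i' _ => ?_
          rw [hsplit2 i', Finset.prod_union (hdisj2 i')]
        rw [step3]
        congr 1
        exact Finset.prod_comm' (by simp)
      · rw [hP, ← himg, Finset.prod_image (fun p _ q _ h => hιinj h)]
    have hwprod : ∏ i' : Fin k, Lagrange.nodalWeight univ lam (ι i')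
        = ((VM * RV) * P)⁻¹ := by
      have h1 : ∀ i' : Fin k, Lagrange.nodalWeight univ lam (ι i')
          = (∏ j ∈ (univ : Finset (Fin n)).erase (ι i'), (lam (ι i') - lam j))⁻¹ := by
        intro i'
        rw [Lagrange.nodalWeight, Finset.prod_inv_distrib]
      simp only [h1]
      rw [Finset.prod_inv_distrib, hprodd]
    -- nonvanishing
    have hRV0 : RV ≠ 0 := by
      rw [hRV]
      refine Finset.prod_ne_zero_iff.mpr fun p _ => Finset.prod_ne_zero_iff.mpr fun q hq => ?_
      exact sub_ne_zero.mpr (fun h => absurd (hxinj h) (ne_of_lt (mem_Ioi.mp hq)))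
    have hVM0 : VM ≠ 0 := by
      rw [hVM]
      refine Finset.prod_ne_zero_iff.mpr fun p _ => Finset.prod_ne_zero_iff.mpr fun q hq => ?_
      exact sub_ne_zero.mpr (fun h => absurd (hxinj h) (ne_of_gt (mem_Ioi.mp hq)))
    have hP0 : P ≠ 0 := by
      rw [hP]
      refine Finset.prod_ne_zero_iff.mpr fun i hi => Finset.prod_ne_zero_iff.mpr fun j hj => ?_
      refine sub_ne_zero.mpr (fun h => ?_)
      have := hlam h
      rw [this] at hi
      exact (mem_compl.mp hj) hi
    -- the Schur evaluation
    have hschur : schurEval k μ (fun i => lam (ι i)) = (A.submatrix ι id).det / RV := by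
      rw [schurEval]
      congr 1
      exact det_pow_rev (fun i => lam (ι i))
    -- put it together
    rw [hBfact, Matrix.det_mul, hdetT, hdetW, hwprod, one_mul]
    show (((VM * RV) * P)⁻¹ * VM) * (A.submatrix ι id).det
      = schurEval k μ (fun i => lam (ι i)) / P
    rw [hschur]
    field_simp
  calc ∑ I : {s : Finset (Fin n) // s.card = k},
        schurEval k μ (fun i => lam ((I.1.orderIsoOfFin I.2) i : Fin n)) /
          ∏ i ∈ I.1, ∏ j ∈ I.1ᶜ, (lam i - lam j)
      = ∑ I : {s : Finset (Fin n) // s.card = k},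
        (B.submatrix id (fun i => ((I.1.orderIsoOfFin I.2) i : Fin n))).det *
        (A.submatrix (fun i => ((I.1.orderIsoOfFin I.2) i : Fin n)) id).det :=
        (Finset.sum_congr rfl fun I _ => (hterm I).symm)
    _ = (B * A).det := (cauchy_binet B A).symm
    _ = if μ = fun _ => n - k then (1 : F) else 0 := hdet
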